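/- Let a = cos(θ)e^{i(φ₁+φ₂)/2} and b = sin(θ)e^{i(φ₁−φ₂)/2} with sin(θ)cos(θ) ≠ 0, and let α = 1/√2, β = e^{iξ}/√2. Then aα·conj(bβ) + conj(aα)·bβ = 0 if and only if φ₂ ≡ π/2 + ξ (mod π). -/

import Mathlib

open Real Complex

theorem symmetry_condition (θ φ₁ φ₂ ξ : ℝ)
    (hθ : Real.sin θ * Real.cos θ ≠ 0)
    (a : ℂ) (ha : a = (Real.cos θ : ℂ) * Complex.exp (Complex.I * ((φ₁ + φ₂) / 2)))
    (b : ℂ) (hb : b = (Real.sin θ : ℂ) * Complex.exp (Complex.I * ((φ₁ - φ₂) / 2)))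
    (α : ℂ) (hα : α = 1 / Real.sqrt 2)
    (β : ℂ) (hβ : β = Complex.exp (Complex.I * ξ) / Real.sqrt 2) :
    a * α * (starRingEnd ℂ) (b * β) + (starRingEnd ℂ) (a * α) * (b * β) = 0 ↔
      ∃ k : ℤ, φ₂ = π / 2 + ξ + k * π := by
  have hs : (Real.sqrt 2 : ℝ) * Real.sqrt 2 = 2 := Real.mul_self_sqrt (by norm_num)
  have hsne : ((Real.sqrt 2 : ℝ) : ℂ) ≠ 0 := by
    exact_mod_cast Complex.ofReal_ne_zero.mpr (by positivity)
  have h2c : ((Real.sqrt 2 : ℝ) : ℂ) * ((Real.sqrt 2 : ℝ) : ℂ) = 2 := by exact_mod_cast hs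
  have key : a * α * (starRingEnd ℂ) (b * β) + (starRingEnd ℂ) (a * α) * (b * β)
      = ((Real.sin θ * Real.cos θ * Real.cos (φ₂ - ξ) : ℝ) : ℂ) := by
    subst ha hb hα hβ
    simp only [map_mul, map_div₀, map_one, ← Complex.exp_conj, map_add, map_sub,
      Complex.conj_I, Complex.conj_ofReal, map_ofNat]
    field_simp
    rw [sq, h2c]
    ring_nf
    have p1 : ∀ (u v x y z : ℂ), u * Complex.exp x * v * Complex.exp y * Complex.exp z
        = u * v * Complex.exp (x + y + z) := by
      intros; rw [Complex.exp_add, Complex.exp_add]; ring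
    have p2 : ∀ (u x y z : ℂ), u * Complex.exp x * Complex.exp y * Complex.exp z
        = u * Complex.exp (x + y + z) := by
      intros; rw [Complex.exp_add, Complex.exp_add]; ring
    rw [p2, p2]
    ring_nf
    rw [show Complex.I * (φ₂:ℂ) - Complex.I * (ξ:ℂ) = ((φ₂:ℂ) - ξ) * Complex.I by ring,
      show -(Complex.I * (φ₂:ℂ)) + Complex.I * (ξ:ℂ) = -((φ₂:ℂ) - ξ) * Complex.I by ring,
      Complex.exp_mul_I, Complex.exp_mul_I, Complex.cos_neg, Complex.sin_neg]
    push_cast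
    ring
  rw [key, Complex.ofReal_eq_zero, mul_eq_zero]
  constructor
  · rintro (h | h)
    · exact absurd h hθ
    · rw [Real.cos_eq_zero_iff] at h
      obtain ⟨k, hk⟩ := h
      exact ⟨k, by linarith⟩
  · rintro ⟨k, hk⟩
    right
    rw [Real.cos_eq_zero_iff]
    exact ⟨k, by linarith⟩
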